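/- Let f : E → F be an exact functor between exact categories and let T be an exact substructure of the exact structure T₀ on F. Then the class S_f of short exact sequences η in E such that f(η) belongs to T is an exact structure on E. In particular, f induces an order-preserving map from the poset of exact substructures of F to the poset of exact substructures of E. -/

import Mathlib

open CategoryTheory CategoryTheory.Limits

universe v u v' u'

/-- A Quillen exact structure on an additive category `C`. -/
structure ExactStructure (C : Type u) [Category.{v} C] [Preadditive C]
    [HasBinaryBiproducts C] where
  sequences : Set (ShortComplex C)
  isKernel : ∀ S ∈ sequences, Nonempty (IsLimit (KernelFork.ofι S.f S.zero))
  isCokernel : ∀ S ∈ sequences, Nonempty (IsColimit (CokernelCofork.ofπ S.g S.zero))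
  iso_closed : ∀ S ∈ sequences, ∀ S' : ShortComplex C, (S ≅ S') → S' ∈ sequences
  split_mem : ∀ X Y : C,
    ShortComplex.mk (biprod.inl : X ⟶ X ⊞ Y) (biprod.snd : X ⊞ Y ⟶ Y) (by simp) ∈ sequences
  infl_comp : ∀ {X Y Z : C} (f : X ⟶ Y) (g : Y ⟶ Z),
    (∃ (W : C) (q : Y ⟶ W) (w : f ≫ q = 0), ShortComplex.mk f q w ∈ sequences) →
    (∃ (W : C) (q : Z ⟶ W) (w : g ≫ q = 0), ShortComplex.mk g q w ∈ sequences) →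
    (∃ (W : C) (q : Z ⟶ W) (w : (f ≫ g) ≫ q = 0), ShortComplex.mk (f ≫ g) q w ∈ sequences)
  defl_comp : ∀ {X Y Z : C} (f : X ⟶ Y) (g : Y ⟶ Z),
    (∃ (W : C) (i : W ⟶ X) (w : i ≫ f = 0), ShortComplex.mk i f w ∈ sequences) →
    (∃ (W : C) (i : W ⟶ Y) (w : i ≫ g = 0), ShortComplex.mk i g w ∈ sequences) →
    (∃ (W : C) (i : W ⟶ X) (w : i ≫ (f ≫ g) = 0), ShortComplex.mk i (f ≫ g) w ∈ sequences)
  pushout_ex : ∀ S ∈ sequences, ∀ (A : C) (a : S.X₁ ⟶ A),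
    ∃ S' ∈ sequences, ∃ (φ : S ⟶ S') (e : A ≅ S'.X₁),
      φ.τ₁ = a ≫ e.hom ∧ IsIso φ.τ₃ ∧ IsPushout S.f φ.τ₁ φ.τ₂ S'.f
  pullback_ex : ∀ S ∈ sequences, ∀ (A : C) (c : A ⟶ S.X₃),
    ∃ S' ∈ sequences, ∃ (φ : S' ⟶ S) (e : S'.X₃ ≅ A),
      φ.τ₃ = e.hom ≫ c ∧ IsIso φ.τ₁ ∧ IsPullback S'.g φ.τ₂ φ.τ₃ S.g

variable {E : Type u} [Category.{v} E] [Preadditive E] [HasBinaryBiproducts E]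
variable {F : Type u'} [Category.{v'} F] [Preadditive F] [HasBinaryBiproducts F]

/-- A short complex with a cokernel structure whose first map has a retraction splits,
hence belongs to any exact structure. -/
lemma ExactStructure.mem_of_retraction (T : ExactStructure F) (D : ShortComplex F)
    (hc : IsColimit (CokernelCofork.ofπ D.g D.zero))
    (r : D.X₂ ⟶ D.X₁) (hr : D.f ≫ r = 𝟙 _) : D ∈ T.sequences := by
  have hepi : Epi D.g := by
    have := epi_of_isColimit_cofork hc
    simpa using this
  obtain ⟨θ, hθ⟩ := CokernelCofork.IsColimit.desc' hc (𝟙 D.X₂ - r ≫ D.f)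
    (by simp [Preadditive.comp_sub, reassoc_of% hr])
  simp only [Cofork.π_ofπ] at hθ
  -- hθ : D.g ≫ θ = 𝟙 D.X₂ - r ≫ D.f
  have hgθr : D.g ≫ θ ≫ r = 0 := by
    rw [← Category.assoc, hθ]
    simp [Preadditive.sub_comp, Category.assoc, hr]
  set θ' : D.X₃ ⟶ D.X₂ := θ - θ ≫ r ≫ D.f with hθ'def
  have hθg : θ ≫ D.g = 𝟙 _ := by
    rw [← cancel_epi D.g, ← Category.assoc, hθ]
    simp [Preadditive.sub_comp]
  have hθ'g : θ' ≫ D.g = 𝟙 _ := by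
    simp [hθ'def, Preadditive.sub_comp, Category.assoc, hθg]
  have hθ'r : θ' ≫ r = 0 := by
    have : (r ≫ D.f) ≫ r = r := by rw [Category.assoc, hr, Category.comp_id]
    simp [hθ'def, Preadditive.sub_comp, Category.assoc, hr]
  have hgθ' : D.g ≫ θ' = 𝟙 D.X₂ - r ≫ D.f := by
    simp only [hθ'def, Preadditive.comp_sub]
    rw [← Category.assoc, ← Category.assoc, hθ]
    rw [show (𝟙 D.X₂ - r ≫ D.f) ≫ r = 0 from ?_]
    · simp
    · simp [Preadditive.sub_comp, Category.assoc, hr]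
  -- the iso between the split complex and D
  have h1 : (biprod.desc D.f θ' : D.X₁ ⊞ D.X₃ ⟶ D.X₂) ≫ biprod.lift r D.g = 𝟙 _ := by
    ext
    · simp [hr]
    · simp [D.zero]
    · simp [hθ'r]
    · simp [hθ'g]
  have h2 : (biprod.lift r D.g : D.X₂ ⟶ D.X₁ ⊞ D.X₃) ≫ biprod.desc D.f θ' = 𝟙 _ := by
    rw [biprod.lift_desc, hgθ']
    abel
  refine T.iso_closed _ (T.split_mem D.X₁ D.X₃) D
    (ShortComplex.isoMk (Iso.refl _) ⟨biprod.desc D.f θ', biprod.lift r D.g, h1, h2⟩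
      (Iso.refl _) ?_ ?_)
  · simp
  · ext
    · simp [D.zero]
    · simp [hθ'g]

/-- Two admissible cokernels of the same admissible mono give isomorphic sequences. -/
lemma ExactStructure.coker_compare (T : ExactStructure F) {X Y Z W : F} (u : X ⟶ Y)
    (q : Y ⟶ Z) (wq : u ≫ q = 0) (hq : ShortComplex.mk u q wq ∈ T.sequences)
    (q' : Y ⟶ W) (wq' : u ≫ q' = 0)
    (hc : IsColimit (CokernelCofork.ofπ q' wq')) :
    ShortComplex.mk u q' wq' ∈ T.sequences := by
  have h := (T.isCokernel _ hq).some
  obtain ⟨γ, hγ⟩ := CokernelCofork.IsColimit.desc' h q' wq'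
  obtain ⟨δ, hδ⟩ := CokernelCofork.IsColimit.desc' hc q wq
  simp only [Cofork.π_ofπ] at hγ hδ
  have hepi : Epi q := by simpa using epi_of_isColimit_cofork h
  have hepi' : Epi q' := by simpa using epi_of_isColimit_cofork hc
  have h1 : γ ≫ δ = 𝟙 _ := by
    rw [← cancel_epi q, ← Category.assoc, hγ, hδ]; simp
  have h2 : δ ≫ γ = 𝟙 _ := by
    rw [← cancel_epi q', ← Category.assoc, hδ, hγ]; simp
  exact T.iso_closed _ hq _
    (ShortComplex.isoMk (Iso.refl _) (Iso.refl _) ⟨γ, δ, h1, h2⟩ (by simp) (by simp [hγ]))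

/-- Two admissible kernels of the same admissible epi give isomorphic sequences. -/
lemma ExactStructure.ker_compare (T : ExactStructure F) {Y Z W W' : F} (p : Y ⟶ Z)
    (i : W ⟶ Y) (wi : i ≫ p = 0) (hi : ShortComplex.mk i p wi ∈ T.sequences)
    (i' : W' ⟶ Y) (wi' : i' ≫ p = 0)
    (hk : IsLimit (KernelFork.ofι i' wi')) :
    ShortComplex.mk i' p wi' ∈ T.sequences := by
  have h := (T.isKernel _ hi).some
  obtain ⟨γ, hγ⟩ := KernelFork.IsLimit.lift' hk i wi
  obtain ⟨δ, hδ⟩ := KernelFork.IsLimit.lift' h i' wi'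
  simp only [Fork.ι_ofι] at hγ hδ
  have hm : Mono i := by simpa using mono_of_isLimit_fork h
  have hm' : Mono i' := by simpa using mono_of_isLimit_fork hk
  have h1 : γ ≫ δ = 𝟙 _ := by
    rw [← cancel_mono i, Category.assoc, hδ, hγ]; simp
  have h2 : δ ≫ γ = 𝟙 _ := by
    rw [← cancel_mono i', Category.assoc, hγ, hδ]; simp
  exact T.iso_closed _ hi _
    (ShortComplex.isoMk ⟨γ, δ, h1, h2⟩ (Iso.refl _) (Iso.refl _) (by simp [hγ]) (by simp))

/-- Short five lemma: a morphism of admissible short exact sequences which is an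
isomorphism on the outer terms is an isomorphism in the middle. -/
lemma ExactStructure.short5 (U : ExactStructure F) {S₁ S₂ : ShortComplex F}
    (h₁ : S₁ ∈ U.sequences) (hk₂ : IsLimit (KernelFork.ofι S₂.f S₂.zero))
    (φ : S₁ ⟶ S₂) (i₁ : IsIso φ.τ₁) (i₃ : IsIso φ.τ₃) : IsIso φ.τ₂ := by
  have hmono₂ : Mono S₂.f := by simpa using mono_of_isLimit_fork hk₂
  -- normalize: twist S₁ so that the outer maps become identities
  set N : ShortComplex F := ShortComplex.mk (inv φ.τ₁ ≫ S₁.f) (S₁.g ≫ φ.τ₃)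
    (by rw [Category.assoc, ShortComplex.zero_assoc, Limits.zero_comp, comp_zero]) with hNdef
  have hN : N ∈ U.sequences := by
    refine U.iso_closed S₁ h₁ N
      (ShortComplex.isoMk (asIso φ.τ₁) (Iso.refl _) (asIso φ.τ₃) ?_ ?_)
    · simp [hNdef, N]
    · simp [hNdef, N]
  set s : S₁.X₂ ⟶ S₂.X₂ := φ.τ₂ with hsdef
  have hfs : N.f ≫ s = S₂.f := by
    simp [hNdef, hsdef, Category.assoc, ← φ.comm₁₂, N]
  have hsg : s ≫ S₂.g = N.g := by
    simp [hNdef, hsdef, φ.comm₂₃, N]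
  -- pull N back along S₂.g
  obtain ⟨P, hP, χ, e, hχ₃, hχ₁, hpb⟩ := U.pullback_ex N hN S₂.X₂ S₂.g
  -- construct a retraction of P.f
  have ht₀ : (P.g ≫ e.hom - χ.τ₂ ≫ s) ≫ S₂.g = 0 := by
    rw [Preadditive.sub_comp, Category.assoc, Category.assoc, hsg, ← hχ₃, hpb.w, sub_self]
  obtain ⟨ρ₀, hρ₀⟩ := KernelFork.IsLimit.lift' hk₂ _ ht₀
  simp only [Fork.ι_ofι] at hρ₀
  have hPf : P.f ≫ ρ₀ = -χ.τ₁ := by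
    rw [← cancel_mono S₂.f, Category.assoc, hρ₀, Preadditive.comp_sub, Preadditive.neg_comp,
      ← hfs, ← Category.assoc P.f χ.τ₂ s, ← χ.comm₁₂, ← Category.assoc P.f P.g e.hom,
      P.zero, Limits.zero_comp, zero_sub, Category.assoc]
  have hr : P.f ≫ (-(ρ₀ ≫ inv χ.τ₁)) = 𝟙 _ := by
    rw [Preadditive.comp_neg, ← Category.assoc, hPf, Preadditive.neg_comp, neg_neg,
      IsIso.hom_inv_id]
  set r : P.X₂ ⟶ P.X₁ := -(ρ₀ ≫ inv χ.τ₁) with hrdef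
  -- a section of P.g
  have hcP := (U.isCokernel P hP).some
  have hepiPg : Epi P.g := by simpa using epi_of_isColimit_cofork hcP
  obtain ⟨θ, hθ⟩ := CokernelCofork.IsColimit.desc' hcP (𝟙 P.X₂ - r ≫ P.f)
    (by rw [Preadditive.comp_sub, Category.comp_id, ← Category.assoc, hr,
        Category.id_comp, sub_self])
  simp only [Cofork.π_ofπ] at hθ
  have hθg : θ ≫ P.g = 𝟙 _ := by
    rw [← cancel_epi P.g, ← Category.assoc, hθ]
    simp [Preadditive.sub_comp, Category.assoc]
  set θ' : P.X₃ ⟶ P.X₂ := θ - θ ≫ r ≫ P.f with hθ'def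
  have hθ'g : θ' ≫ P.g = 𝟙 _ := by
    simp [hθ'def, Preadditive.sub_comp, Category.assoc, hθg]
  have hθ'r : θ' ≫ r = 0 := by
    have : P.f ≫ r = 𝟙 _ := hr
    simp [hθ'def, Preadditive.sub_comp, Category.assoc, this]
  -- the candidate inverse
  set t : S₂.X₂ ⟶ S₁.X₂ := e.inv ≫ θ' ≫ χ.τ₂ with htdef
  have hts : t ≫ s = 𝟙 _ := by
    have hχ₂s : χ.τ₂ ≫ s = P.g ≫ e.hom - ρ₀ ≫ S₂.f := by
      rw [hρ₀]; abel
    have hθ'ρ₀ : θ' ≫ ρ₀ = 0 := by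
      have : ρ₀ = -(r ≫ χ.τ₁) := by
        rw [hrdef]
        simp [Preadditive.neg_comp, Category.assoc]
      rw [this, Preadditive.comp_neg, ← Category.assoc, hθ'r, Limits.zero_comp, neg_zero]
    rw [htdef, Category.assoc, Category.assoc, hχ₂s, Preadditive.comp_sub,
      ← Category.assoc θ' P.g, hθ'g, Category.id_comp, ← Category.assoc θ' ρ₀, hθ'ρ₀,
      Limits.zero_comp, sub_zero, Iso.inv_hom_id]
  -- s is mono
  have hkN := (U.isKernel N hN).some
  have hmonos : Mono s := by
    constructor
    intro Z a b hab
    have hab' : (a - b) ≫ s = 0 := by rw [Preadditive.sub_comp, hab, sub_self]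
    have h1 : (a - b) ≫ N.g = 0 := by
      rw [← hsg, ← Category.assoc, hab', Limits.zero_comp]
    obtain ⟨w', hw'⟩ := KernelFork.IsLimit.lift' hkN _ h1
    simp only [Fork.ι_ofι] at hw'
    have h2 : w' ≫ N.f ≫ s = 0 := by rw [← Category.assoc, hw', hab']
    rw [hfs] at h2
    have h3 : w' = 0 := by
      rw [← cancel_mono S₂.f, h2, Limits.zero_comp]
    have : a - b = 0 := by rw [← hw', h3, Limits.zero_comp]
    exact sub_eq_zero.mp this
  have hst : s ≫ t = 𝟙 _ := by
    rw [← cancel_mono s, Category.assoc, hts, Category.comp_id, Category.id_comp]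
  exact ⟨t, hst, hts⟩

/-- The image under a functor of an isomorphism of short complexes. -/
noncomputable def mapShortComplexIso (f : E ⥤ F) {S S' : ShortComplex E} (i : S ≅ S')
    (w : f.map S.f ≫ f.map S.g = 0) (w' : f.map S'.f ≫ f.map S'.g = 0) :
    ShortComplex.mk (f.map S.f) (f.map S.g) w ≅ ShortComplex.mk (f.map S'.f) (f.map S'.g) w' :=
  ShortComplex.isoMk (f.mapIso (asIso i.hom.τ₁)) (f.mapIso (asIso i.hom.τ₂))
    (f.mapIso (asIso i.hom.τ₃))
    (by dsimp; rw [← f.map_comp, ← f.map_comp, i.hom.comm₁₂])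
    (by dsimp; rw [← f.map_comp, ← f.map_comp, i.hom.comm₂₃])

/-- A functor is exact (with respect to given exact structures) if it sends admissible
short exact sequences to admissible short exact sequences. -/
def ExactOn (EE : ExactStructure E) (T₀ : ExactStructure F) (f : E ⥤ F) : Prop :=
  ∀ S ∈ EE.sequences, ∃ w : f.map S.f ≫ f.map S.g = 0,
    ShortComplex.mk (f.map S.f) (f.map S.g) w ∈ T₀.sequences

/-- The class `S_{f,T}` of admissible short exact sequences `η` of `E` such that `f(η)`
lies in the class `T`. -/
def Sf (EE : ExactStructure E) (f : E ⥤ F) (T : Set (ShortComplex F)) :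
    Set (ShortComplex E) :=
  {S | S ∈ EE.sequences ∧
    ∃ w : f.map S.f ≫ f.map S.g = 0, ShortComplex.mk (f.map S.f) (f.map S.g) w ∈ T}

/-- Let `f : E → F` be an exact functor between exact categories and `T` an exact
substructure of the exact structure `T₀` on `F`.  Then `S_f = S_{f,T}` is an exact
structure on `E`; in particular `f` induces an order-preserving map from the poset of
exact substructures of `F` to the poset of exact substructures of `E`. -/
theorem Sf_exactStructure_of_exact_functor
    (EE : ExactStructure E) (T₀ : ExactStructure F) (f : E ⥤ F)
    (hf : ExactOn EE T₀ f) :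
    (∀ T : ExactStructure F, T.sequences ⊆ T₀.sequences →
      ∃ ES : ExactStructure E, ES.sequences = Sf EE f T.sequences) ∧
    (∀ T T' : ExactStructure F, T.sequences ⊆ T₀.sequences →
      T'.sequences ⊆ T₀.sequences → T.sequences ⊆ T'.sequences →
      Sf EE f T.sequences ⊆ Sf EE f T'.sequences) := by
  constructor
  · intro T hT
    refine ⟨⟨Sf EE f T.sequences, ?_, ?_, ?_, ?_, ?_, ?_, ?_, ?_⟩, rfl⟩
    · -- isKernel
      exact fun S hS => EE.isKernel S hS.1
    · -- isCokernel
      exact fun S hS => EE.isCokernel S hS.1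
    · -- iso_closed
      rintro S ⟨hSE, w, hw⟩ S' i
      have hS'E := EE.iso_closed S hSE S' i
      obtain ⟨w', -⟩ := hf S' hS'E
      exact ⟨hS'E, w', T.iso_closed _ hw _ (mapShortComplexIso f i w w')⟩
    · -- split_mem
      intro X Y
      refine ⟨EE.split_mem X Y, ?_⟩
      obtain ⟨w, h₀⟩ := hf _ (EE.split_mem X Y)
      refine ⟨w, T.mem_of_retraction _ (T₀.isCokernel _ h₀).some (f.map biprod.fst) ?_⟩
      dsimp
      rw [← f.map_comp, biprod.inl_fst, f.map_id]
    · -- infl_comp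
      rintro X Y Z a b ⟨W₁, q₁, w₁, hq₁E, wf₁, hq₁T⟩ ⟨W₂, q₂, w₂, hq₂E, wf₂, hq₂T⟩
      obtain ⟨W₀, q₀, w₀, hW₀⟩ := EE.infl_comp a b ⟨W₁, q₁, w₁, hq₁E⟩ ⟨W₂, q₂, w₂, hq₂E⟩
      obtain ⟨wf₀, h₀T₀⟩ := hf _ hW₀
      obtain ⟨W', q', w', hq'T⟩ := T.infl_comp (f.map a) (f.map b)
        ⟨_, f.map q₁, wf₁, hq₁T⟩ ⟨_, f.map q₂, wf₂, hq₂T⟩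
      refine ⟨W₀, q₀, w₀, hW₀, wf₀, ?_⟩
      simp only [Functor.map_comp] at h₀T₀ wf₀ ⊢
      exact T.coker_compare _ q' w' hq'T (f.map q₀) wf₀ (T₀.isCokernel _ h₀T₀).some
    · -- defl_comp
      rintro X Y Z a b ⟨W₁, i₁, w₁, hi₁E, wf₁, hi₁T⟩ ⟨W₂, i₂, w₂, hi₂E, wf₂, hi₂T⟩
      obtain ⟨W₀, i₀, w₀, hW₀⟩ := EE.defl_comp a b ⟨W₁, i₁, w₁, hi₁E⟩ ⟨W₂, i₂, w₂, hi₂E⟩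
      obtain ⟨wf₀, h₀T₀⟩ := hf _ hW₀
      obtain ⟨W', i', w', hi'T⟩ := T.defl_comp (f.map a) (f.map b)
        ⟨_, f.map i₁, wf₁, hi₁T⟩ ⟨_, f.map i₂, wf₂, hi₂T⟩
      refine ⟨W₀, i₀, w₀, hW₀, wf₀, ?_⟩
      simp only [Functor.map_comp] at h₀T₀ wf₀ ⊢
      exact T.ker_compare _ i' w' hi'T (f.map i₀) wf₀ (T₀.isKernel _ h₀T₀).some
    · -- pushout_ex
      rintro S ⟨hSE, wS, hST⟩ A a
      obtain ⟨S', hS'E, φ, e, hφ₁, hφ₃, hpo⟩ := EE.pushout_ex S hSE A a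
      obtain ⟨wD, hDT₀⟩ := hf S' hS'E
      obtain ⟨S'', hS''T, ψ, e', hψ₁, hψ₃, hpo'⟩ :=
        T.pushout_ex _ hST (f.obj S'.X₁) (f.map φ.τ₁)
      have hcomm : (ShortComplex.mk (f.map S.f) (f.map S.g) wS).f ≫ f.map φ.τ₂ =
          ψ.τ₁ ≫ (e'.inv ≫ f.map S'.f) := by
        dsimp
        rw [hψ₁, Category.assoc, e'.hom_inv_id_assoc, ← f.map_comp, ← f.map_comp, φ.comm₁₂]
      set u := hpo'.desc (f.map φ.τ₂) (e'.inv ≫ f.map S'.f) hcomm with hudef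
      have hu₁ : ψ.τ₂ ≫ u = f.map φ.τ₂ := hpo'.inl_desc _ _ _
      have hu₂ : S''.f ≫ u = e'.inv ≫ f.map S'.f := hpo'.inr_desc _ _ _
      haveI := hφ₃
      haveI := hψ₃
      set v : S''.X₃ ⟶ f.obj S'.X₃ := inv ψ.τ₃ ≫ f.map φ.τ₃ with hvdef
      have hv : u ≫ f.map S'.g = S''.g ≫ v := by
        apply hpo'.hom_ext
        · rw [← Category.assoc, hu₁, ← f.map_comp, φ.comm₂₃, f.map_comp,
            ψ.comm₂₃_assoc, hvdef, IsIso.hom_inv_id_assoc]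
        · rw [← Category.assoc, hu₂, Category.assoc, wD, comp_zero, ← Category.assoc,
            S''.zero, Limits.zero_comp]
      set χ : S'' ⟶ ShortComplex.mk (f.map S'.f) (f.map S'.g) wD :=
        ShortComplex.homMk e'.inv u v hu₂.symm hv with hχdef
      have hχ₁iso : IsIso χ.τ₁ := by
        show IsIso e'.inv
        infer_instance
      have hχ₃iso : IsIso χ.τ₃ := by
        show IsIso (inv ψ.τ₃ ≫ f.map φ.τ₃)
        infer_instance
      have hχ₂iso : IsIso χ.τ₂ :=
        T.short5 hS''T (T₀.isKernel _ hDT₀).some χ hχ₁iso hχ₃iso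
      have : IsIso χ := ShortComplex.isIso_of_isIso χ
      have hDT : ShortComplex.mk (f.map S'.f) (f.map S'.g) wD ∈ T.sequences :=
        T.iso_closed _ hS''T _ (asIso χ)
      exact ⟨S', ⟨hS'E, wD, hDT⟩, φ, e, hφ₁, hφ₃, hpo⟩
    · -- pullback_ex
      rintro S ⟨hSE, wS, hST⟩ A c
      obtain ⟨S', hS'E, φ, e, hφ₃, hφ₁, hpb⟩ := EE.pullback_ex S hSE A c
      obtain ⟨wD, hDT₀⟩ := hf S' hS'E
      obtain ⟨S'', hS''T, ψ, e', hψ₃, hψ₁, hpb'⟩ :=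
        T.pullback_ex _ hST (f.obj S'.X₃) (f.map φ.τ₃)
      have hcomm : (f.map S'.g ≫ e'.inv) ≫ ψ.τ₃ =
          f.map φ.τ₂ ≫ (ShortComplex.mk (f.map S.f) (f.map S.g) wS).g := by
        dsimp
        rw [hψ₃, Category.assoc, e'.inv_hom_id_assoc, ← f.map_comp, ← f.map_comp, φ.comm₂₃]
      set u := hpb'.lift (f.map S'.g ≫ e'.inv) (f.map φ.τ₂) hcomm with hudef
      have hu₁ : u ≫ S''.g = f.map S'.g ≫ e'.inv := hpb'.lift_fst _ _ _
      have hu₂ : u ≫ ψ.τ₂ = f.map φ.τ₂ := hpb'.lift_snd _ _ _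
      haveI := hφ₁
      haveI := hψ₁
      set w₁ : f.obj S'.X₁ ⟶ S''.X₁ := f.map φ.τ₁ ≫ inv ψ.τ₁ with hw₁def
      have hw₁comm : w₁ ≫ S''.f = f.map S'.f ≫ u := by
        apply hpb'.hom_ext
        · simp only [Category.assoc, ShortComplex.zero, comp_zero, hu₁]
          rw [← Category.assoc, wD, Limits.zero_comp]
        · simp only [Category.assoc, hu₂, hw₁def]
          rw [← ψ.comm₁₂, IsIso.inv_hom_id_assoc]
          dsimp
          rw [← f.map_comp, ← f.map_comp, φ.comm₁₂]
      set χ : ShortComplex.mk (f.map S'.f) (f.map S'.g) wD ⟶ S'' :=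
        ShortComplex.homMk w₁ u e'.inv hw₁comm hu₁ with hχdef
      have hχ₁iso : IsIso χ.τ₁ := by
        show IsIso (f.map φ.τ₁ ≫ inv ψ.τ₁)
        infer_instance
      have hχ₃iso : IsIso χ.τ₃ := by
        show IsIso e'.inv
        infer_instance
      have hχ₂iso : IsIso χ.τ₂ :=
        T₀.short5 hDT₀ (T.isKernel _ hS''T).some χ hχ₁iso hχ₃iso
      have : IsIso χ := ShortComplex.isIso_of_isIso χ
      have hDT : ShortComplex.mk (f.map S'.f) (f.map S'.g) wD ∈ T.sequences :=
        T.iso_closed _ hS''T _ (asIso χ).symm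
      exact ⟨S', ⟨hS'E, wD, hDT⟩, φ, e, hφ₃, hφ₁, hpb⟩
  · rintro T T' - - hTT' S ⟨hSE, w, hw⟩
    exact ⟨hSE, w, hTT' hw⟩
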